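/- If a set of M matrices B_1,...,B_M ∈ F_q^{N×ℓ} is (M,Q)-balanced for G, then time-sharing the M scalar linear codes with equal shares yields a vector linear index code with broadcast rate ℓ and locality at most (Q + (M−Q)ℓ)/M = ℓ − Q(ℓ−1)/M; hence β_G*((Q + (M−Q)ℓ)/M) ≤ ℓ. -/

import Mathlib

open Finset

/-- A unicast index coding problem on `N` receivers: receiver `i` demands message `i`
and knows messages indexed by `K i` as side information, with `i ∉ K i`. -/
structure IndexProblem (N : ℕ) where
  K : Fin N → Finset (Fin N)
  not_self : ∀ i, i ∉ K i

/-- A valid index code over alphabet `A` with message length `m` and codeword length `ℓ`: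
an encoder together with query sets `R i`, such that receiver `i` can decode `x i`
exactly from the queried codeword symbols `c_{R i}` and its side information. -/
structure IndexCode (N : ℕ) (G : IndexProblem N) (A : Type*) (m ℓ : ℕ) where
  enc : (Fin N → Fin m → A) → Fin ℓ → A
  R : Fin N → Finset (Fin ℓ)
  valid : ∀ (i : Fin N) (x y : Fin N → Fin m → A),
    (∀ t ∈ R i, enc x t = enc y t) → (∀ j ∈ G.K i, x j = y j) → x i = y i

/-- The optimal broadcast rate function `β_G^*(r)`: the infimum of broadcast rates `ℓ/m`
over all message lengths `m ≥ 1` and valid index codes with locality at most `r`. -/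
noncomputable def betaStar (A : Type*) {N : ℕ} (G : IndexProblem N) (r : ℝ) : ℝ :=
  sInf {β : ℝ | ∃ (m ℓ : ℕ) (_ : 0 < m) (C : IndexCode N G A m ℓ),
    (∀ i, ((C.R i).card : ℝ) ≤ r * m) ∧ β = (ℓ : ℝ) / m}

/-- A matrix `A` fits the side information graph `G` if its diagonal entries are `1`
and `A j i = 0` for all `i ≠ j` with `j ∉ K i`. -/
def Fits {N : ℕ} {F : Type*} [Field F] (G : IndexProblem N)
    (A : Matrix (Fin N) (Fin N) F) : Prop :=
  (∀ i, A i i = 1) ∧ ∀ i j, j ≠ i → j ∉ G.K i → A j i = 0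

/-- `B` is a valid scalar linear encoding matrix for `G`: every receiver `i` can recover
`x i` from the codeword `c = x B` and its side information `(x j, j ∈ K i)`. -/
def IsValidEncMatrix {N ℓ : ℕ} {F : Type*} [Field F] (G : IndexProblem N)
    (B : Matrix (Fin N) (Fin ℓ) F) : Prop :=
  ∀ (i : Fin N) (x y : Fin N → F),
    Matrix.vecMul x B = Matrix.vecMul y B → (∀ j ∈ G.K i, x j = y j) → x i = y i

/-- The column space of a matrix, i.e. the span of its columns. -/
def colSpace {n ℓ : ℕ} {F : Type*} [Field F] (B : Matrix (Fin n) (Fin ℓ) F) :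
    Submodule F (Fin n → F) :=
  Submodule.span F (Set.range B.transpose)

open Classical

/-- if `B_1, …, B_M` is an `(M,Q)`-balanced set of matrices for `G` (each with
a fitting matrix `A_j` of identical column space, and each receiver `i` having at least `Q`
indices `j` for which the `i`-th column of `A_j` is a column of `B_j`), then time-sharing the
`M` scalar linear codes equally yields a vector linear index code with broadcast rate `ℓ` and
locality at most `(Q + (M−Q)ℓ)/M = ℓ − Q(ℓ−1)/M`; hence `β_G^*((Q + (M−Q)ℓ)/M) ≤ ℓ`. -/
theorem balanced_set_theorem {N M Q ℓ : ℕ} {F : Type*} [Field F]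
    (G : IndexProblem N) (hM : 0 < M)
    (B : Fin M → Matrix (Fin N) (Fin ℓ) F) (A : Fin M → Matrix (Fin N) (Fin N) F)
    (hfit : ∀ j, Fits G (A j))
    (hcol : ∀ j, colSpace (A j) = colSpace (B j))
    (hQ : ∀ i : Fin N,
      Q ≤ (Finset.univ.filter fun j => ∃ t : Fin ℓ, (A j).transpose i = (B j).transpose t).card) :
    ((Q : ℝ) + ((M : ℝ) - Q) * ℓ) / M = (ℓ : ℝ) - Q * ((ℓ : ℝ) - 1) / M ∧
    (∃ C : IndexCode N G F M (M * ℓ), ∀ i,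
        ((C.R i).card : ℝ) ≤ (Q : ℝ) + ((M : ℝ) - Q) * ℓ) ∧
    betaStar F G (((Q : ℝ) + ((M : ℝ) - Q) * ℓ) / M) ≤ ℓ := by

  classical
  -- the "good" predicate: receiver i has locality 1 under code j
  have hS : ∀ (i : Fin N) (j : Fin M), ∃ S : Finset (Fin ℓ),
      (S.card = if (∃ t : Fin ℓ, (A j).transpose i = (B j).transpose t) then 1 else ℓ) ∧
      ∃ c : Fin ℓ → F, (∀ t, t ∉ S → c t = 0) ∧
        (A j).transpose i = ∑ t, c t • (B j).transpose t := by
    intro i j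
    by_cases h : ∃ t : Fin ℓ, (A j).transpose i = (B j).transpose t
    · obtain ⟨t0, ht0⟩ := h
      refine ⟨{t0}, ?_, fun t => if t = t0 then 1 else 0, ?_, ?_⟩
      · have hex : ∃ t : Fin ℓ, (A j).transpose i = (B j).transpose t := ⟨t0, ht0⟩
        simp [hex]
      · intro t ht; simp only [Finset.mem_singleton] at ht; simp [ht]
      · rw [ht0]
        have hsm : ∀ t : Fin ℓ, (if t = t0 then (1:F) else 0) • (B j).transpose t
            = if t = t0 then (B j).transpose t else 0 := by
          intro t; by_cases h : t = t0 <;> simp [h]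
        rw [Finset.sum_congr rfl fun t _ => hsm t, Finset.sum_ite_eq' Finset.univ t0 (fun t => (B j).transpose t)]
        simp
    · have hmem : (A j).transpose i ∈ colSpace (B j) := by
        rw [← hcol j]
        exact Submodule.subset_span ⟨i, rfl⟩
      rw [colSpace] at hmem
      obtain ⟨c, hc⟩ := (Submodule.mem_span_range_iff_exists_fun F).mp hmem
      exact ⟨Finset.univ, by simp [h], c, fun t ht => absurd (Finset.mem_univ t) ht, hc.symm⟩
  choose S hScard c hc0 hcsum using hS
  -- the time-sharing code
  let e : Fin M × Fin ℓ ≃ Fin (M * ℓ) := finProdFinEquiv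
  let C : IndexCode N G F M (M * ℓ) :=
    { enc := fun x k => Matrix.vecMul (fun n => x n (e.symm k).1) (B (e.symm k).1) (e.symm k).2
      R := fun i => (Finset.univ.biUnion fun j => {j} ×ˢ S i j).map e.toEmbedding
      valid := by
        intro i x y hR hK
        funext j
        set f : Fin N → F := fun n => x n j with hf
        set g : Fin N → F := fun n => y n j with hg
        have hencj : ∀ t ∈ S i j, Matrix.vecMul f (B j) t = Matrix.vecMul g (B j) t := by
          intro t ht
          have hmem : e (j, t) ∈ (Finset.univ.biUnion fun j' => {j'} ×ˢ S i j').map e.toEmbedding := by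
            simp only [Finset.mem_map, Equiv.coe_toEmbedding]
            exact ⟨(j, t), Finset.mem_biUnion.2 ⟨j, Finset.mem_univ j,
              Finset.mem_product.2 ⟨Finset.mem_singleton_self j, ht⟩⟩, rfl⟩
          have := hR (e (j, t)) hmem
          simpa [Equiv.symm_apply_apply] using this
        have hA : ∀ n, A j n i = ∑ t, c i j t * B j n t := by
          intro n
          have := congrFun (hcsum i j) n
          simpa [Matrix.transpose_apply, Finset.sum_apply, smul_eq_mul] using this
        have h1 : ∑ n, (f n - g n) * A j n i = f i - g i := by
          have key : ∀ n ∈ Finset.univ, (f n - g n) * A j n i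
              = if n = i then f i - g i else 0 := by
            intro n _
            by_cases hn : n = i
            · subst hn; simp [(hfit j).1 n]
            · by_cases hk : n ∈ G.K i
              · have hxy : x n = y n := hK n hk
                simp [hf, hg, hxy, hn]
              · simp [(hfit j).2 i n hn hk, hn]
          rw [Finset.sum_congr rfl key]
          simp
        have h2 : ∑ n, (f n - g n) * A j n i
            = ∑ t, c i j t * (Matrix.vecMul f (B j) t - Matrix.vecMul g (B j) t) := by
          calc ∑ n, (f n - g n) * A j n i
              = ∑ n, ∑ t, c i j t * ((f n - g n) * B j n t) := by
                refine Finset.sum_congr rfl fun n _ => ?_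
                rw [hA n, Finset.mul_sum]
                refine Finset.sum_congr rfl fun t _ => by ring
            _ = ∑ t, ∑ n, c i j t * ((f n - g n) * B j n t) := Finset.sum_comm
            _ = ∑ t, c i j t * (Matrix.vecMul f (B j) t - Matrix.vecMul g (B j) t) := by
                refine Finset.sum_congr rfl fun t _ => ?_
                rw [← Finset.mul_sum]
                congr 1
                simp [Matrix.vecMul, dotProduct, ← Finset.sum_sub_distrib, sub_mul]
        have h3 : ∑ t, c i j t * (Matrix.vecMul f (B j) t - Matrix.vecMul g (B j) t) = 0 := by
          refine Finset.sum_eq_zero fun t _ => ?_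
          by_cases ht : t ∈ S i j
          · rw [hencj t ht]; ring
          · rw [hc0 i j t ht]; ring
        have : f i - g i = 0 := by rw [← h1, h2, h3]
        exact sub_eq_zero.mp this }
  -- cardinality of the query sets
  have hcard : ∀ i, ((C.R i).card : ℝ) ≤ (Q : ℝ) + ((M : ℝ) - Q) * ℓ := by
    intro i
    have hdisj : ∀ j ∈ (Finset.univ : Finset (Fin M)), ∀ j' ∈ (Finset.univ : Finset (Fin M)),
        j ≠ j' → Disjoint ({j} ×ˢ S i j) ({j'} ×ˢ S i j') := by
      intro j _ j' _ hjj'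
      refine Finset.disjoint_left.2 fun p hp hp' => ?_
      have h1 := (Finset.mem_product.1 hp).1
      have h2 := (Finset.mem_product.1 hp').1
      simp only [Finset.mem_singleton] at h1 h2
      exact hjj' (h1.symm.trans h2)
    have hcnat : (C.R i).card = ∑ j, (S i j).card := by
      show ((Finset.univ.biUnion fun j => {j} ×ˢ S i j).map e.toEmbedding).card = _
      rw [Finset.card_map, Finset.card_biUnion hdisj]
      refine Finset.sum_congr rfl fun j _ => ?_
      rw [Finset.card_product, Finset.card_singleton, one_mul]
    set gd := Finset.univ.filter fun j : Fin M =>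
      ∃ t : Fin ℓ, (A j).transpose i = (B j).transpose t with hgd
    have hsum : ∑ j, (S i j).card = (Finset.univ \ gd).card * ℓ + gd.card := by
      have h1 : ∀ j ∈ gd, (S i j).card = 1 := fun j hj => by
        rw [hScard i j, if_pos]; exact (Finset.mem_filter.1 hj).2
      have h2 : ∀ j ∈ Finset.univ \ gd, (S i j).card = ℓ := fun j hj => by
        rw [hScard i j, if_neg]
        exact fun h => (Finset.mem_sdiff.1 hj).2 (Finset.mem_filter.2 ⟨Finset.mem_univ j, h⟩)
      rw [← Finset.sum_sdiff (Finset.subset_univ gd), Finset.sum_congr rfl h2,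
        Finset.sum_congr rfl h1, Finset.sum_const, Finset.sum_const, smul_eq_mul,
        smul_eq_mul, mul_one]
    have hgdM : gd.card ≤ M := by
      calc gd.card ≤ (Finset.univ : Finset (Fin M)).card := Finset.card_le_card (Finset.filter_subset _ _)
        _ = M := Finset.card_univ.trans (Fintype.card_fin M)
    have hQg : Q ≤ gd.card := hQ i
    have hsdc : (Finset.univ \ gd).card = M - gd.card := by
      rw [Finset.card_sdiff_of_subset (Finset.subset_univ gd), Finset.card_univ, Fintype.card_fin]
    rw [hcnat, hsum, hsdc]
    push_cast [Nat.cast_sub hgdM]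
    rcases Nat.eq_zero_or_pos ℓ with hl0 | hl1
    · subst hl0
      have : gd.card = 0 := by
        rw [hgd]
        refine Finset.card_eq_zero.2 (Finset.filter_eq_empty_iff.2 fun j _ => ?_)
        rintro ⟨t, -⟩
        exact t.elim0
      have hQ0 : Q = 0 := by omega
      simp [this, hQ0]
    · have h1l : (1 : ℝ) ≤ (ℓ : ℝ) := by exact_mod_cast hl1
      have hQgR : (Q : ℝ) ≤ gd.card := by exact_mod_cast hQg
      have hgMR : (gd.card : ℝ) ≤ M := by exact_mod_cast hgdM
      nlinarith [mul_nonneg (sub_nonneg.2 hQgR) (sub_nonneg.2 h1l)]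
  have hMR : (0 : ℝ) < M := by exact_mod_cast hM
  refine ⟨by field_simp; ring, ⟨C, hcard⟩, ?_⟩
  -- β* bound via the constructed code
  have hmem : (ℓ : ℝ) ∈ {β : ℝ | ∃ (m ℓ' : ℕ) (_ : 0 < m) (C : IndexCode N G F m ℓ'),
      (∀ i, ((C.R i).card : ℝ) ≤ (((Q : ℝ) + ((M : ℝ) - Q) * ℓ) / M) * m) ∧ β = (ℓ' : ℝ) / m} := by
    refine ⟨M, M * ℓ, hM, C, fun i => ?_, ?_⟩
    · rw [div_mul_cancel₀ _ (ne_of_gt hMR)]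
      exact hcard i
    · push_cast
      rw [mul_comm]
      field_simp
  have hbdd : BddBelow {β : ℝ | ∃ (m ℓ' : ℕ) (_ : 0 < m) (C : IndexCode N G F m ℓ'),
      (∀ i, ((C.R i).card : ℝ) ≤ (((Q : ℝ) + ((M : ℝ) - Q) * ℓ) / M) * m) ∧ β = (ℓ' : ℝ) / m} := by
    refine ⟨0, ?_⟩
    rintro β ⟨m, ℓ', hm, C', -, rfl⟩
    positivity
  exact csInf_le hbdd hmem
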